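/- Let S be a decomposable SPN over a finite set V of variables with finite nonempty domains, all of whose sum-node weights are nonnegative. Then for every subset Y ⊆ V and every partial assignment y of Y, the evaluation with partial evidence equals the sum of full evaluations over all completions: S(y) = ∑_{x total assignment of V with x restricted to Y equal to y} S(x). -/

import Mathlib

attribute [local instance] Classical.propDecidable

noncomputable section

/-- Indicator variable `[v]_k` relative to a partial assignment `y`
(`y v = none` means `v` is unobserved). -/
def Indicator {Var : Type} (y : Var → Option ℕ) (v : Var) (k : ℕ) : ℝ :=
  match y v with
  | none => 1
  | some i => if i = k then 1 else 0

/-- A (decomposable) sum-product network over variables `Var` with domain sizes `dom`: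
indicator leaves, products, and weighted sums, with children indexed by `Fin n`. -/
inductive SPN (Var : Type) (dom : Var → ℕ) : Type where
  | leaf (v : Var) (i : ℕ) : SPN Var dom
  | prod (n : ℕ) (c : Fin n → SPN Var dom) : SPN Var dom
  | sum (n : ℕ) (w : Fin n → ℝ) (c : Fin n → SPN Var dom) : SPN Var dom

namespace SPN

variable {Var : Type} {dom : Var → ℕ}

/-- The scope of an SPN. -/
def scope : SPN Var dom → Set Var
  | .leaf v _ => {v}
  | .prod _ c => ⋃ k, (c k).scope
  | .sum _ _ c => ⋃ k, (c k).scope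

/-- Validity (decomposability): leaves use in-domain values, products have at least one
child and pairwise disjoint child scopes, sums have at least one child, nonnegative
weights and a common child scope. -/
def Valid : SPN Var dom → Prop
  | .leaf v i => i < dom v
  | .prod n c => 0 < n ∧ (∀ k, (c k).Valid) ∧
      ∀ k k', k ≠ k' → Disjoint ((c k).scope) ((c k').scope)
  | .sum n w c => 0 < n ∧ (∀ k, 0 ≤ w k) ∧ (∀ k, (c k).Valid) ∧
      ∀ k k', (c k).scope = (c k').scope

/-- Evaluation of an SPN at a partial assignment `y`. -/
def eval (y : Var → Option ℕ) : SPN Var dom → ℝ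
  | .leaf v i => Indicator y v i
  | .prod n c => ∏ k : Fin n, (c k).eval y
  | .sum n w c => ∑ k : Fin n, w k * (c k).eval y

end SPN

namespace SPNaux

open SPN

variable {Var : Type} {dom : Var → ℕ}

lemma eval_congr (S : SPN Var dom) (y y' : Var → Option ℕ)
    (h : ∀ v ∈ S.scope, y v = y' v) : S.eval y = S.eval y' := by
  induction S with
  | leaf v i =>
      have := h v (by simp [scope])
      simp [eval, Indicator, this]
  | prod n c ih =>
      simp only [eval]
      exact Finset.prod_congr rfl fun k _ =>
        ih k (fun v hv => h v (Set.mem_iUnion.2 ⟨k, hv⟩))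
  | sum n w c ih =>
      simp only [eval]
      exact Finset.sum_congr rfl fun k _ => by
        rw [ih k (fun v hv => h v (Set.mem_iUnion.2 ⟨k, hv⟩))]

lemma eval_marginalize [DecidableEq Var] (S : SPN Var dom) (hS : S.Valid)
    (v : Var) (hv : v ∈ S.scope) (y : Var → Option ℕ) (hyv : y v = none) :
    S.eval y = ∑ i : Fin (dom v), S.eval (Function.update y v (some (i : ℕ))) := by
  induction S with
  | leaf u j =>
      have huv : v = u := hv
      subst huv
      have hj : j < dom v := hS
      simp only [eval, Indicator, hyv, Function.update_self]
      have hiff : ∀ i : Fin (dom v), ((i : ℕ) = j) ↔ (i = ⟨j, hj⟩) := fun i =>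
        ⟨fun h => Fin.ext h, fun h => by rw [h]⟩
      simp only [hiff]
      simp
  | prod n c ih =>
      obtain ⟨hn, hval, hdisj⟩ := hS
      obtain ⟨k0, hk0⟩ := Set.mem_iUnion.1 hv
      have hnot : ∀ k, k ≠ k0 → v ∉ (c k).scope := by
        intro k hk hmem
        exact (hdisj k k0 hk).ne_of_mem hmem hk0 rfl
      have hrest : ∀ (i : ℕ) (k : Fin n), k ∈ Finset.univ.erase k0 →
          (c k).eval (Function.update y v (some i)) = (c k).eval y := by
        intro i k hk
        refine eval_congr _ _ _ fun u hu => ?_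
        have : u ≠ v := fun h => hnot k (Finset.mem_erase.1 hk).1 (h ▸ hu)
        simp [Function.update_of_ne this]
      simp only [eval]
      rw [← Finset.mul_prod_erase Finset.univ _ (Finset.mem_univ k0),
        ih k0 (hval k0) hk0, Finset.sum_mul]
      refine Finset.sum_congr rfl fun i _ => ?_
      rw [← Finset.mul_prod_erase Finset.univ
        (fun k => (c k).eval (Function.update y v (some (i : ℕ)))) (Finset.mem_univ k0)]
      congr 1
      exact Finset.prod_congr rfl fun k hk => (hrest _ k hk).symm
  | sum n w c ih =>
      obtain ⟨hn, hw, hval, hsc⟩ := hS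
      obtain ⟨k0, hk0⟩ := Set.mem_iUnion.1 hv
      have hvk : ∀ k, v ∈ (c k).scope := fun k => (hsc k0 k) ▸ hk0
      simp only [eval]
      rw [Finset.sum_comm]
      refine Finset.sum_congr rfl fun k _ => ?_
      rw [ih k (hval k) (hvk k), Finset.mul_sum]

end SPNaux

/-- Let `S` be a decomposable SPN over a finite set of variables with
finite nonempty domains (with scope all of the variables), all of whose sum-node weights
are nonnegative.  Then for every partial assignment `y` (taking values inside the
domains), the evaluation with partial evidence equals the sum of full evaluations over
all completions: `S(y) = ∑_{x total, x|_Y = y} S(x)`. -/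
theorem spn_partial_evaluation_eq_sum_completions {Var : Type}
    [Fintype Var] [DecidableEq Var] {dom : Var → ℕ} (hdom : ∀ v : Var, 0 < dom v)
    (S : SPN Var dom) (hS : S.Valid) (hscope : S.scope = (Set.univ : Set Var))
    (y : Var → Option ℕ) (hy : ∀ v i, y v = some i → i < dom v) :
    S.eval y =
      ∑ x ∈ Finset.univ.filter
          (fun x : ∀ v : Var, Fin (dom v) =>
            ∀ (v : Var) (i : ℕ), y v = some i → (x v : ℕ) = i),
        S.eval fun v => some ((x v : ℕ)) := by
  suffices H : ∀ (n : ℕ) (y : Var → Option ℕ), (∀ v i, y v = some i → i < dom v) →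
      (Finset.univ.filter fun v => y v = none).card = n →
      S.eval y =
        ∑ x ∈ Finset.univ.filter
            (fun x : ∀ v : Var, Fin (dom v) =>
              ∀ (v : Var) (i : ℕ), y v = some i → (x v : ℕ) = i),
          S.eval fun v => some ((x v : ℕ)) by
    exact H _ y hy rfl
  intro n
  induction n with
  | zero =>
      intro y hy hcard
      have hall : ∀ v, y v ≠ none := by
        intro v hv
        have : v ∈ Finset.univ.filter fun v => y v = none := by simp [hv]
        simp [Finset.card_eq_zero.1 hcard] at this
      have hex : ∀ v, ∃ i, y v = some i := fun v =>
        Option.ne_none_iff_exists'.1 (hall v)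
      set x0 : ∀ v : Var, Fin (dom v) := fun v =>
        ⟨(hex v).choose, hy v _ (hex v).choose_spec⟩ with hx0
      have hyx : ∀ v, y v = some ((x0 v : ℕ)) := fun v => (hex v).choose_spec
      have hfilter : (Finset.univ.filter
          (fun x : ∀ v : Var, Fin (dom v) =>
            ∀ (v : Var) (i : ℕ), y v = some i → (x v : ℕ) = i)) = {x0} := by
        ext x
        simp only [Finset.mem_filter, Finset.mem_univ, true_and, Finset.mem_singleton]
        constructor
        · intro h
          funext v
          exact Fin.ext (h v _ (hyx v))
        · rintro rfl v i hi
          rw [hyx v] at hi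
          exact Option.some_injective _ hi
      rw [hfilter, Finset.sum_singleton]
      exact SPNaux.eval_congr S _ _ fun v _ => hyx v
  | succ n ih =>
      intro y hy hcard
      have hne : ∃ v, y v = none := by
        have : (Finset.univ.filter fun v => y v = none).Nonempty :=
          Finset.card_pos.1 (by omega)
        obtain ⟨v, hv⟩ := this
        exact ⟨v, (Finset.mem_filter.1 hv).2⟩
      obtain ⟨v, hv⟩ := hne
      have hvscope : v ∈ S.scope := by rw [hscope]; trivial
      rw [SPNaux.eval_marginalize S hS v hvscope y hv]
      have hupd : ∀ i : Fin (dom v), S.eval (Function.update y v (some (i : ℕ))) =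
          ∑ x ∈ Finset.univ.filter
              (fun x : ∀ u : Var, Fin (dom u) =>
                ∀ (u : Var) (j : ℕ), Function.update y v (some (i : ℕ)) u = some j →
                  (x u : ℕ) = j),
            S.eval fun u => some ((x u : ℕ)) := by
        intro i
        refine ih (Function.update y v (some (i : ℕ))) ?_ ?_
        · intro u j hj
          by_cases h : u = v
          · subst h
            rw [Function.update_self] at hj
            exact (Option.some_injective _ hj) ▸ i.2
          · rw [Function.update_of_ne h] at hj
            exact hy u j hj
        · have : (Finset.univ.filter fun u => Function.update y v (some (i : ℕ)) u = none)
              = (Finset.univ.filter fun u => y u = none).erase v := by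
            ext u
            by_cases h : u = v
            · subst h; simp
            · simp [Function.update_of_ne h, h]
          rw [this, Finset.card_erase_of_mem (by simp [hv]), hcard]
          omega
      simp only [hupd]
      have hfib : ∀ i : Fin (dom v),
          (Finset.univ.filter
              (fun x : ∀ u : Var, Fin (dom u) =>
                ∀ (u : Var) (j : ℕ), Function.update y v (some (i : ℕ)) u = some j →
                  (x u : ℕ) = j))
          = (Finset.univ.filter
              (fun x : ∀ u : Var, Fin (dom u) =>
                ∀ (u : Var) (j : ℕ), y u = some j → (x u : ℕ) = j)).filter
              (fun x => x v = i) := by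
        intro i
        ext x
        simp only [Finset.mem_filter, Finset.mem_univ, true_and]
        constructor
        · intro h
          refine ⟨fun u j hj => ?_, ?_⟩
          · have huv : u ≠ v := fun he => by rw [he, hv] at hj; cases hj
            exact h u j (by rw [Function.update_of_ne huv]; exact hj)
          · exact Fin.ext (h v (i : ℕ) (by rw [Function.update_self]))
        · rintro ⟨h, hxv⟩ u j hj
          by_cases huv : u = v
          · subst huv
            rw [Function.update_self] at hj
            rw [hxv]
            exact Option.some_injective _ hj
          · rw [Function.update_of_ne huv] at hj
            exact h u j hj
      calc ∑ i : Fin (dom v), ∑ x ∈ Finset.univ.filter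
              (fun x : ∀ u : Var, Fin (dom u) =>
                ∀ (u : Var) (j : ℕ), Function.update y v (some (i : ℕ)) u = some j →
                  (x u : ℕ) = j),
            S.eval (fun u => some ((x u : ℕ)))
          = ∑ i : Fin (dom v), ∑ x ∈ (Finset.univ.filter
              (fun x : ∀ u : Var, Fin (dom u) =>
                ∀ (u : Var) (j : ℕ), y u = some j → (x u : ℕ) = j)).filter
              (fun x => x v = i),
            S.eval (fun u => some ((x u : ℕ))) := by
            exact Finset.sum_congr rfl fun i _ => by rw [hfib i]
        _ = _ := Finset.sum_fiberwise _ _ _
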